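/- In the Chevalley–Eilenberg complex of L₁ with trivial coefficients, the 2-cochain e¹ ∧ e⁴ is closed and represents a nonzero cohomology class in degree 2, weight 5 (where the weight of eⁱ¹ ∧ eⁱ² is i₁ + i₂). -/
import Mathlib


/-- The 2-cochain `e¹ ∧ e⁴` on `L₁`, recorded by its values
`c i j = (e¹ ∧ e⁴)(e_i, e_j)`. -/
def c (i j : ℕ) : ℚ :=
  if i = 1 ∧ j = 4 then 1 else if i = 4 ∧ j = 1 then -1 else 0

lemma c_zero_of_big (m n : ℕ) (h : 5 ≤ m ∨ 5 ≤ n) : c m n = 0 := by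
  unfold c
  split_ifs with h1 h2
  · exfalso; omega
  · exfalso; omega
  · rfl

/-- In the Chevalley–Eilenberg complex of `L₁` with trivial coefficients (basis `e_i`,
`i ≥ 1`, `[e_i,e_j] = (j-i)e_{i+j}`), the 2-cochain `e¹ ∧ e⁴` (of degree 2 and
weight `1 + 4 = 5`) is closed:
`dc(e_i,e_j,e_k) = -c([e_i,e_j],e_k) + c([e_i,e_k],e_j) - c([e_j,e_k],e_i) = 0`;
and it represents a nonzero cohomology class, i.e. it is not the coboundary of any
1-cochain `b` (where `db(e_i,e_j) = -b([e_i,e_j]) = -(j-i) b(i+j)`). -/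
theorem cocycle_g2_minus_closed_not_exact :
    (∀ i j k : ℕ, 1 ≤ i → 1 ≤ j → 1 ≤ k →
      -(((j : ℚ) - i) * c (i + j) k) + ((k : ℚ) - i) * c (i + k) j
        - ((k : ℚ) - j) * c (j + k) i = 0) ∧
    (∀ b : ℕ → ℚ, ∃ i j : ℕ, 1 ≤ i ∧ 1 ≤ j ∧ c i j ≠ -(((j : ℚ) - i) * b (i + j))) := by
  constructor
  · intro i j k hi hj hk
    by_cases h : i ≤ 4 ∧ j ≤ 4 ∧ k ≤ 4
    · obtain ⟨h1, h2, h3⟩ := h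
      interval_cases i <;> interval_cases j <;> interval_cases k <;> norm_num [c]
    · rw [c_zero_of_big (i + j) k (by omega), c_zero_of_big (i + k) j (by omega),
        c_zero_of_big (j + k) i (by omega)]
      ring
  · intro b
    by_cases hb : b 5 = 0
    · exact ⟨1, 4, le_refl 1, by norm_num, by norm_num [c, hb]⟩
    · exact ⟨2, 3, by norm_num, by norm_num, by norm_num [c]; simpa using hb⟩
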